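/- Let H be a Hermitian n×n complex matrix, let ħ > 0, and let t ↦ ρ_t be a differentiable family of positive definite, unit-trace n×n complex matrices satisfying the Landau–von Neumann equation iħ dρ_t/dt = [H, ρ_t]. Then the von Neumann entropy is invariant under the evolution: d/dt tr(ρ_t log ρ_t) = 0 for all t. -/

import Mathlib

open Matrix
open scoped ComplexOrder

/-- Matrix logarithm of a Hermitian matrix, defined through the functional calculus
on its (real) spectrum. -/
noncomputable def mlog {n : ℕ} {A : Matrix (Fin n) (Fin n) ℂ} (hA : A.IsHermitian) :
    Matrix (Fin n) (Fin n) ℂ :=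
  hA.cfc Real.log

section Helpers

open NormedSpace

variable {n : ℕ}

lemma mlog_congr {A B : Matrix (Fin n) (Fin n) ℂ} (h : A = B)
    (hA : A.IsHermitian) (hB : B.IsHermitian) : mlog hA = mlog hB := by
  subst h; rfl

/-- Entrywise derivative of a matrix-valued product. -/
lemma entry_mul_hasDerivAt {t : ℝ} {M N : ℝ → Matrix (Fin n) (Fin n) ℂ}
    {M' N' : Matrix (Fin n) (Fin n) ℂ}
    (hM : ∀ i j, HasDerivAt (fun s => M s i j) (M' i j) t)
    (hN : ∀ i j, HasDerivAt (fun s => N s i j) (N' i j) t) (i j : Fin n) :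
    HasDerivAt (fun s => (M s * N s) i j) ((M' * N t + M t * N') i j) t := by
  simp only [Matrix.mul_apply, Matrix.add_apply]
  rw [← Finset.sum_add_distrib]
  exact HasDerivAt.fun_sum fun k _ => ((hM i k).mul (hN k j))

/-- Entrywise derivative of the matrix exponential `t ↦ exp (t • B)`. -/
lemma entry_hasDerivAt_exp (B : Matrix (Fin n) (Fin n) ℂ) (t : ℝ) (i j : Fin n) :
    HasDerivAt (fun s : ℝ => (exp (s • B)) i j) ((B * exp (t • B)) i j) t := by
  letI : NormedRing (Matrix (Fin n) (Fin n) ℂ) := Matrix.linftyOpNormedRing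
  letI : NormedAlgebra ℝ (Matrix (Fin n) (Fin n) ℂ) := Matrix.linftyOpNormedAlgebra
  haveI : CompleteSpace (Matrix (Fin n) (Fin n) ℂ) := FiniteDimensional.complete ℝ _
  have h := hasDerivAt_exp_smul_const' (𝕂 := ℝ) B t
  let L : Matrix (Fin n) (Fin n) ℂ →ₗ[ℝ] ℂ :=
    { toFun := fun M => M i j
      map_add' := fun _ _ => rfl
      map_smul' := fun _ _ => rfl }
  exact (LinearMap.toContinuousLinearMap L).hasFDerivAt.comp_hasDerivAt t h

/-- Conjugation by a unitary matrix as a star algebra homomorphism. -/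
noncomputable def conjSAH (U : Matrix (Fin n) (Fin n) ℂ)
    (hU : U * star U = 1) (hU' : star U * U = 1) :
    Matrix (Fin n) (Fin n) ℂ →⋆ₐ[ℂ] Matrix (Fin n) (Fin n) ℂ where
  toFun M := U * M * star U
  map_one' := by show U * 1 * star U = 1; rw [mul_one, hU]
  map_mul' M N := by
    simp only [mul_assoc]
    rw [← mul_assoc (star U) U, hU', one_mul]
  map_zero' := by simp
  map_add' M N := by noncomm_ring
  commutes' r := by
    simp only [Algebra.algebraMap_eq_smul_one]
    rw [mul_smul_comm, mul_one, smul_mul_assoc, hU]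
  map_star' M := by
    show U * star M * star U = star (U * M * star U)
    simp only [Matrix.star_mul, star_star, mul_assoc]

lemma conjSAH_continuous (U : Matrix (Fin n) (Fin n) ℂ)
    (hU : U * star U = 1) (hU' : star U * U = 1) :
    Continuous (conjSAH U hU hU') := by
  show Continuous fun M => U * M * star U
  exact (continuous_const.matrix_mul continuous_id).matrix_mul continuous_const

/-- `mlog` commutes with unitary conjugation. -/
lemma mlog_conj {U : Matrix (Fin n) (Fin n) ℂ}
    (hU : U * star U = 1) (hU' : star U * U = 1)
    {A : Matrix (Fin n) (Fin n) ℂ} (hA : A.IsHermitian)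
    (hB : (U * A * star U).IsHermitian) :
    mlog hB = U * mlog hA * star U := by
  have hAsa : IsSelfAdjoint A := hA
  haveI : Finite (spectrum ℝ A) := by
    rw [hA.spectrum_real_eq_range_eigenvalues]
    exact (Set.finite_range _).to_subtype
  haveI : CompactSpace (spectrum ℝ A) := by
    rw [← isCompact_iff_compactSpace]
    exact Set.Finite.isCompact (Set.toFinite _)
  have hcont : ContinuousOn Real.log (spectrum ℝ A) := by
    rw [continuousOn_iff_continuous_restrict]
    exact continuous_of_discreteTopology
  have hφa : IsSelfAdjoint ((conjSAH U hU hU') A) := hB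
  have h := StarAlgHomClass.map_cfc (conjSAH U hU hU') Real.log A hcont
    (conjSAH_continuous U hU hU') hAsa hφa
  unfold mlog
  rw [← Matrix.IsHermitian.cfc_eq, ← Matrix.IsHermitian.cfc_eq]
  exact h.symm

end Helpers

/-- **Invariance of the von Neumann entropy under Hamiltonian evolution.**
If `ρ_t` is a differentiable family of positive definite unit-trace matrices solving the
Landau–von Neumann equation `iħ dρ/dt = [H, ρ]` with Hermitian `H`, then
`d/dt tr(ρ_t log ρ_t) = 0` for all `t`. -/
theorem von_neumann_entropy_invariant
    {n : ℕ} (H : Matrix (Fin n) (Fin n) ℂ) (hH : H.IsHermitian)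
    (hbar : ℝ) (hpos : 0 < hbar)
    (ρ ρ' : ℝ → Matrix (Fin n) (Fin n) ℂ)
    (hρpd : ∀ t, (ρ t).PosDef)
    (hρtr : ∀ t, (ρ t).trace = 1)
    (hρdiff : ∀ t i j, HasDerivAt (fun s => ρ s i j) (ρ' t i j) t)
    -- Landau–von Neumann equation: iħ dρ/dt = [H, ρ]
    (hρeq : ∀ t, (Complex.I * (hbar : ℂ)) • ρ' t = H * ρ t - ρ t * H) :
    ∀ t : ℝ, HasDerivAt
      (fun s => Matrix.trace (ρ s * mlog (hρpd s).1)) 0 t := by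
  have hne : (Complex.I * (hbar : ℂ)) ≠ 0 :=
    mul_ne_zero Complex.I_ne_zero (by exact_mod_cast hpos.ne')
  set c : ℂ := (Complex.I * (hbar : ℂ))⁻¹ with hc
  set B : Matrix (Fin n) (Fin n) ℂ := c • H with hB
  have hρ' : ∀ t, ρ' t = B * ρ t - ρ t * B := by
    intro t
    have h1 : ρ' t = c • (H * ρ t - ρ t * H) := by
      rw [← hρeq t, hc, smul_smul, inv_mul_cancel₀ hne, one_smul]
    rw [h1, smul_sub, hB, smul_mul_assoc, mul_smul_comm]
  have hstarB : star B = -B := by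
    have hcc : star c = -c := by
      simp only [hc, star_inv₀, star_mul', Complex.star_def, Complex.conj_I,
        Complex.conj_ofReal]
      rw [neg_mul, inv_neg]
    rw [hB, star_smul, hcc, star_eq_conjTranspose, hH.eq, neg_smul]
  set U : ℝ → Matrix (Fin n) (Fin n) ℂ := fun t => NormedSpace.exp (t • B) with hUdef
  set W : ℝ → Matrix (Fin n) (Fin n) ℂ := fun t => NormedSpace.exp (t • (-B)) with hWdef
  have hWstar : ∀ t, W t = star (U t) := by
    intro t
    rw [hWdef, hUdef]
    rw [NormedSpace.star_exp, star_smul, hstarB, star_trivial]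
  have hUW : ∀ t, U t * W t = 1 := by
    intro t
    rw [hUdef, hWdef]
    have hcomm : Commute (t • B) (t • (-B)) :=
      (((Commute.refl B).neg_right).smul_left t).smul_right t
    rw [← Matrix.exp_add_of_commute _ _ hcomm, smul_neg, add_neg_cancel,
      NormedSpace.exp_zero]
  have hWU : ∀ t, W t * U t = 1 := by
    intro t
    rw [hUdef, hWdef]
    have hcomm : Commute (t • (-B)) (t • B) :=
      (((Commute.refl B).neg_left).smul_left t).smul_right t
    rw [← Matrix.exp_add_of_commute _ _ hcomm, smul_neg, neg_add_cancel,
      NormedSpace.exp_zero]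
  have hUd : ∀ t i j, HasDerivAt (fun s => U s i j) ((B * U t) i j) t := fun t i j =>
    entry_hasDerivAt_exp B t i j
  have hWd : ∀ t i j, HasDerivAt (fun s => W s i j) (((-B) * W t) i j) t := fun t i j =>
    entry_hasDerivAt_exp (-B) t i j
  set σ : ℝ → Matrix (Fin n) (Fin n) ℂ := fun s => W s * ρ s * U s with hσdef
  have hBW : ∀ t, B * W t = W t * B := by
    intro t
    have : Commute B (t • (-B)) := ((Commute.refl B).neg_right).smul_right t
    exact (this.exp_right)
  have hσd : ∀ t i j, HasDerivAt (fun s => σ s i j) 0 t := by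
    intro t i j
    have h1 : ∀ i j, HasDerivAt (fun s => (W s * ρ s) i j)
        (((-B) * W t * ρ t + W t * ρ' t) i j) t :=
      fun i j => entry_mul_hasDerivAt (hWd t) (hρdiff t) i j
    have h2 := entry_mul_hasDerivAt (M := fun s => W s * ρ s) (N := U)
      (M' := (-B) * W t * ρ t + W t * ρ' t) (N' := B * U t) h1 (hUd t) i j
    have hD : ((-B) * W t * ρ t + W t * ρ' t) * U t + (W t * ρ t) * (B * U t) = 0 := by
      have hnBW : (-B) * W t = W t * (-B) := by
        rw [neg_mul, hBW t, mul_neg]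
      rw [hρ' t, hnBW]
      noncomm_ring
    rw [hD] at h2
    simpa using h2
  have hσconst : ∀ t, σ t = σ 0 := by
    intro t
    ext i j
    have hdiff : Differentiable ℝ (fun s => σ s i j) := fun s =>
      (hσd s i j).differentiableAt
    exact is_const_of_deriv_eq_zero hdiff (fun s => (hσd s i j).deriv) t 0
  have hσ0 : σ 0 = ρ 0 := by
    simp only [hσdef, hUdef, hWdef, zero_smul, NormedSpace.exp_zero, one_mul, mul_one]
  have hρt : ∀ t, ρ t = U t * ρ 0 * W t := by
    intro t
    have h : W t * ρ t * U t = ρ 0 := by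
      have h0 := (hσconst t).trans hσ0
      simp only [hσdef] at h0
      exact h0
    calc ρ t = (U t * W t) * ρ t * (U t * W t) := by rw [hUW t, one_mul, mul_one]
      _ = U t * (W t * ρ t * U t) * W t := by noncomm_ring
      _ = U t * ρ 0 * W t := by rw [h]
  -- the key conjugation identity
  have hkey : ∀ s, Matrix.trace (ρ s * mlog (hρpd s).1)
      = Matrix.trace (ρ 0 * mlog (hρpd 0).1) := by
    intro s
    have hU1 : U s * star (U s) = 1 := by rw [← hWstar s]; exact hUW s
    have hU2 : star (U s) * U s = 1 := by rw [← hWstar s]; exact hWU s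
    have e : ρ s = U s * ρ 0 * star (U s) := by rw [hρt s, hWstar s]
    have hB' : (U s * ρ 0 * star (U s)).IsHermitian := e ▸ (hρpd s).1
    have hml : mlog (hρpd s).1 = U s * mlog (hρpd 0).1 * star (U s) := by
      rw [mlog_congr e (hρpd s).1 hB']
      exact mlog_conj hU1 hU2 (hρpd 0).1 hB'
    rw [hml, e, ← hWstar s]
    have hprod : (U s * ρ 0 * W s) * (U s * mlog (hρpd 0).1 * W s)
        = U s * (ρ 0 * mlog (hρpd 0).1) * W s := by
      simp only [mul_assoc]
      rw [← mul_assoc (W s) (U s), hWU s, one_mul]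
    rw [hprod, Matrix.trace_mul_cycle, ← mul_assoc, hWU s, one_mul]
  intro t
  have hconstfun : (fun s => Matrix.trace (ρ s * mlog (hρpd s).1))
      = fun _ => Matrix.trace (ρ 0 * mlog (hρpd 0).1) := funext hkey
  rw [hconstfun]
  exact hasDerivAt_const t _
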